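/- Every formula built from literals, ⊤, ⊥ using ∧, ∨, ¬, and the binary connective ⋗ can be reduced, using the rewrite rules ¬s ↦ s^c, ¬(F₁∧F₂) ↦ ¬F₁∨¬F₂, ¬(F₁∨F₂) ↦ ¬F₁∧¬F₂, ¬(s⋗F) ↦ s^c ∨ (s⋗¬F), (F₁⋗F₂)⋗F₃ ↦ (F₁⋗F₃)∧((F₁⋗F₂)∨(F₁⋗F₂⋗F₃)), (F₁∧F₂)⋗F₃ ↦ (F₁⋗F₃)∧(F₂⋗F₃), (F₁∨F₂)⋗F₃ ↦ (F₁⋗F₃)∨(F₂⋗F₃), F₁⋗(F₂∧F₃) ↦ (F₁⋗F₂)∧(F₁⋗F₃), F₁⋗(F₂∨F₃) ↦ (F₁⋗F₂)∨(F₁⋗F₃), into a formula in unit chain expansion (i.e., a formula in which every occurrence of ⋗ appears only in chains s₀⋗s₁⋗⋯⋗s_k of atomic symbols). -/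

import Mathlib

/-- Atomic symbols: literals from `A` together with ⊤ and ⊥. -/
inductive Atom (A : Type) : Type where
  | lit : A → Atom A
  | top : Atom A
  | bot : Atom A

/-- Complement on atoms, induced by a complement map `c` on literals. -/
def Atom.compl {A : Type} (c : A → A) : Atom A → Atom A
  | .lit a => .lit (c a)
  | .top => .bot
  | .bot => .top

/-- Formulas of gradual classical logic. `grad` is the connective ⋗. -/
inductive Fm (A : Type) : Type where
  | atom : Atom A → Fm A
  | and : Fm A → Fm A → Fm A
  | or : Fm A → Fm A → Fm A
  | neg : Fm A → Fm A
  | grad : Fm A → Fm A → Fm A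

/-- One-step rewriting using only the five ⋗-rules (with congruence closure). -/
inductive GStep {A : Type} : Fm A → Fm A → Prop where
  | gradAssoc (F G H) : GStep (.grad (.grad F G) H)
      (.and (.grad F H) (.or (.grad F G) (.grad F (.grad G H))))
  | gradAndL (F G H) : GStep (.grad (.and F G) H) (.and (.grad F H) (.grad G H))
  | gradOrL (F G H) : GStep (.grad (.or F G) H) (.or (.grad F H) (.grad G H))
  | gradAndR (F G H) : GStep (.grad F (.and G H)) (.and (.grad F G) (.grad F H))
  | gradOrR (F G H) : GStep (.grad F (.or G H)) (.or (.grad F G) (.grad F H))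
  | andL {F F'} (G) : GStep F F' → GStep (.and F G) (.and F' G)
  | andR (F) {G G'} : GStep G G' → GStep (.and F G) (.and F G')
  | orL {F F'} (G) : GStep F F' → GStep (.or F G) (.or F' G)
  | orR (F) {G G'} : GStep G G' → GStep (.or F G) (.or F G')
  | negC {F F'} : GStep F F' → GStep (.neg F) (.neg F')
  | gradL {F F'} (G) : GStep F F' → GStep (.grad F G) (.grad F' G)
  | gradR (F) {G G'} : GStep G G' → GStep (.grad F G) (.grad F G')

/-- One-step rewriting with both the ¬-rules and the ⋗-rules (congruence closure). -/
inductive Step {A : Type} (c : A → A) : Fm A → Fm A → Prop where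
  | negAtom (s) : Step c (.neg (.atom s)) (.atom (s.compl c))
  | negAnd (F G) : Step c (.neg (.and F G)) (.or (.neg F) (.neg G))
  | negOr (F G) : Step c (.neg (.or F G)) (.and (.neg F) (.neg G))
  | negGrad (s F) : Step c (.neg (.grad (.atom s) F))
      (.or (.atom (s.compl c)) (.grad (.atom s) (.neg F)))
  | gradAssoc (F G H) : Step c (.grad (.grad F G) H)
      (.and (.grad F H) (.or (.grad F G) (.grad F (.grad G H))))
  | gradAndL (F G H) : Step c (.grad (.and F G) H) (.and (.grad F H) (.grad G H))
  | gradOrL (F G H) : Step c (.grad (.or F G) H) (.or (.grad F H) (.grad G H))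
  | gradAndR (F G H) : Step c (.grad F (.and G H)) (.and (.grad F G) (.grad F H))
  | gradOrR (F G H) : Step c (.grad F (.or G H)) (.or (.grad F G) (.grad F H))
  | andL {F F'} (G) : Step c F F' → Step c (.and F G) (.and F' G)
  | andR (F) {G G'} : Step c G G' → Step c (.and F G) (.and F G')
  | orL {F F'} (G) : Step c F F' → Step c (.or F G) (.or F' G)
  | orR (F) {G G'} : Step c G G' → Step c (.or F G) (.or F G')
  | negC {F F'} : Step c F F' → Step c (.neg F) (.neg F')
  | gradL {F F'} (G) : Step c F F' → Step c (.grad F G) (.grad F' G)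
  | gradR (F) {G G'} : Step c G G' → Step c (.grad F G) (.grad F G')

/-- Reduction: reflexive-transitive closure of one-step rewriting (all rules). -/
def Red {A : Type} (c : A → A) : Fm A → Fm A → Prop :=
  Relation.ReflTransGen (Step c)

/-- Reduction using only the ⋗-rules. -/
def GRed {A : Type} : Fm A → Fm A → Prop :=
  Relation.ReflTransGen GStep

/-- Unit chains (possibly of length one, i.e. a single atom): s₀⋗s₁⋗⋯⋗s_k. -/
inductive UnitTail {A : Type} : Fm A → Prop where
  | atom (s : Atom A) : UnitTail (.atom s)
  | grad (s : Atom A) {F : Fm A} : UnitTail F → UnitTail (.grad (.atom s) F)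

/-- Formulas in unit chain expansion: built from atoms and unit chains via ∧ and ∨;
in particular no ¬ occurs and every ⋗ lies in a unit chain of atoms. -/
inductive UCE {A : Type} : Fm A → Prop where
  | atom (s : Atom A) : UCE (.atom s)
  | and {F G : Fm A} : UCE F → UCE G → UCE (.and F G)
  | or {F G : Fm A} : UCE F → UCE G → UCE (.or F G)
  | chain (s : Atom A) {F : Fm A} : UnitTail F → UCE (.grad (.atom s) F)

/-- Negation-free formulas. -/
inductive NegFree {A : Type} : Fm A → Prop where
  | atom (s : Atom A) : NegFree (.atom s)
  | and {F G : Fm A} : NegFree F → NegFree G → NegFree (.and F G)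
  | or {F G : Fm A} : NegFree F → NegFree G → NegFree (.or F G)
  | grad {F G : Fm A} : NegFree F → NegFree G → NegFree (.grad F G)

/-- A valuation frame: a local interpretation `I` on prefix-sequences and atoms,
subject to the conditions of gradual classical logic.  The global interpretation `J`
is determined by `I` (see `GFrame.valAux`). -/
structure GFrame (A : Type) (c : A → A) : Type where
  I : List (Atom A) → Atom A → Bool
  I_top : ∀ ψ, I ψ .top = true
  I_bot : ∀ ψ, I ψ .bot = false
  I_compl : ∀ ψ (a : A), (I ψ (.lit a) = false ↔ I ψ (.lit (c a)) = true)
  I_sync : ∀ ψ ψ' s, ψ.length = ψ'.length → I ψ s = I ψ' s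

/-- Valuation relative to a prefix ψ.  On a unit chain s₀⋗⋯⋗s_k (with prefix ε)
this computes the global interpretation J(s₀…s_k) = 1 iff every local step is 1;
∧ and ∨ are Boolean. -/
def GFrame.valAux {A : Type} {c : A → A} (M : GFrame A c) :
    List (Atom A) → Fm A → Bool
  | ψ, .atom s => M.I ψ s
  | ψ, .and F G => M.valAux ψ F && M.valAux ψ G
  | ψ, .or F G => M.valAux ψ F || M.valAux ψ G
  | ψ, .neg F => !(M.valAux ψ F)
  | ψ, .grad (.atom s) G => M.I ψ s && M.valAux (ψ ++ [s]) G
  | _, .grad _ _ => false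

/-- The valuation [M ⊨ F]. -/
def GFrame.val {A : Type} {c : A → A} (M : GFrame A c) (F : Fm A) : Bool :=
  M.valAux [] F

/-- Push `s ⋗ ·` through ∧ and ∨ (normalization step of `recursiveReduce`). -/
def gradDist {A : Type} (s : Atom A) : Fm A → Fm A
  | .and F G => .and (gradDist s F) (gradDist s G)
  | .or F G => .or (gradDist s F) (gradDist s G)
  | F => .grad (.atom s) F

/-- `recursiveReduce`: swap ∧/∨, complement non-chain atoms, and replace a chain
with head s and tail T by s^c ∨ (s ⋗ recursiveReduce T), normalized into unit
chain expansion.  On a unit chain s₀⋗⋯⋗s_k it yields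
s₀^c ∨ (s₀⋗s₁^c) ∨ ⋯ ∨ (s₀⋗⋯⋗s_{k−1}⋗s_k^c). -/
def recursiveReduce {A : Type} (c : A → A) : Fm A → Fm A
  | .atom s => .atom (s.compl c)
  | .and F G => .or (recursiveReduce c F) (recursiveReduce c G)
  | .or F G => .and (recursiveReduce c F) (recursiveReduce c G)
  | .neg F => .neg (recursiveReduce c F)
  | .grad (.atom s) G => .or (.atom (s.compl c)) (gradDist s (recursiveReduce c G))
  | .grad F G => .grad (recursiveReduce c F) (recursiveReduce c G)

section StmtAux
variable {A : Type} {c : A → A}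

lemma redAndL {F F' G : Fm A} (h : Red c F F') : Red c (.and F G) (.and F' G) :=
  Relation.ReflTransGen.lift (fun X => Fm.and X G) (fun _ _ s => Step.andL G s) _ _ h

lemma redAndR {F G G' : Fm A} (h : Red c G G') : Red c (.and F G) (.and F G') :=
  Relation.ReflTransGen.lift (fun X => Fm.and F X) (fun _ _ s => Step.andR F s) _ _ h

lemma redOrL {F F' G : Fm A} (h : Red c F F') : Red c (.or F G) (.or F' G) :=
  Relation.ReflTransGen.lift (fun X => Fm.or X G) (fun _ _ s => Step.orL G s) _ _ h

lemma redOrR {F G G' : Fm A} (h : Red c G G') : Red c (.or F G) (.or F G') :=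
  Relation.ReflTransGen.lift (fun X => Fm.or F X) (fun _ _ s => Step.orR F s) _ _ h

lemma redNeg {F F' : Fm A} (h : Red c F F') : Red c (.neg F) (.neg F') :=
  Relation.ReflTransGen.lift Fm.neg (fun _ _ s => Step.negC s) _ _ h

lemma redGradL {F F' G : Fm A} (h : Red c F F') : Red c (.grad F G) (.grad F' G) :=
  Relation.ReflTransGen.lift (fun X => Fm.grad X G) (fun _ _ s => Step.gradL G s) _ _ h

lemma redGradR {F G G' : Fm A} (h : Red c G G') : Red c (.grad F G) (.grad F G') :=
  Relation.ReflTransGen.lift (fun X => Fm.grad F X) (fun _ _ s => Step.gradR F s) _ _ h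

lemma gradAtomUCE (s : Atom A) {G : Fm A} (h : UCE G) :
    ∃ H, Red c (.grad (.atom s) G) H ∧ UCE H := by
  induction h with
  | atom t => exact ⟨_, Relation.ReflTransGen.refl, .chain s (.atom t)⟩
  | @and F G h1 h2 ih1 ih2 =>
    obtain ⟨H1, r1, u1⟩ := ih1
    obtain ⟨H2, r2, u2⟩ := ih2
    exact ⟨.and H1 H2,
      Relation.ReflTransGen.head (Step.gradAndR _ _ _) ((redAndL r1).trans (redAndR r2)),
      .and u1 u2⟩
  | @or F G h1 h2 ih1 ih2 =>
    obtain ⟨H1, r1, u1⟩ := ih1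
    obtain ⟨H2, r2, u2⟩ := ih2
    exact ⟨.or H1 H2,
      Relation.ReflTransGen.head (Step.gradOrR _ _ _) ((redOrL r1).trans (redOrR r2)),
      .or u1 u2⟩
  | chain t hT => exact ⟨_, Relation.ReflTransGen.refl, .chain s (.grad t hT)⟩

lemma gradTailUCE {T G : Fm A} (hT : UnitTail T) (hG : UCE G) :
    ∃ H, Red c (.grad T G) H ∧ UCE H := by
  induction hT generalizing G with
  | atom s => exact gradAtomUCE s hG
  | @grad s T' hT' ih =>
    obtain ⟨H1, r1, u1⟩ := ih hG
    obtain ⟨H2, r2, u2⟩ := gradAtomUCE (c := c) s u1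
    obtain ⟨H3, r3, u3⟩ := gradAtomUCE (c := c) s hG
    refine ⟨.and H3 (.or (.grad (.atom s) T') H2), ?_, .and u3 (.or (.chain s hT') u2)⟩
    refine Relation.ReflTransGen.head (Step.gradAssoc _ _ _) ?_
    exact (redAndL r3).trans (redAndR (redOrR ((redGradR r1).trans r2)))

lemma gradUCE {F G : Fm A} (hF : UCE F) (hG : UCE G) :
    ∃ H, Red c (.grad F G) H ∧ UCE H := by
  induction hF generalizing G with
  | atom s => exact gradAtomUCE s hG
  | @and F1 F2 h1 h2 ih1 ih2 =>
    obtain ⟨H1, r1, u1⟩ := ih1 hG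
    obtain ⟨H2, r2, u2⟩ := ih2 hG
    exact ⟨.and H1 H2,
      Relation.ReflTransGen.head (Step.gradAndL _ _ _) ((redAndL r1).trans (redAndR r2)),
      .and u1 u2⟩
  | @or F1 F2 h1 h2 ih1 ih2 =>
    obtain ⟨H1, r1, u1⟩ := ih1 hG
    obtain ⟨H2, r2, u2⟩ := ih2 hG
    exact ⟨.or H1 H2,
      Relation.ReflTransGen.head (Step.gradOrL _ _ _) ((redOrL r1).trans (redOrR r2)),
      .or u1 u2⟩
  | chain s hT => exact gradTailUCE (.grad s hT) hG

lemma negTailUCE {T : Fm A} (hT : UnitTail T) :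
    ∃ H, Red c (.neg T) H ∧ UCE H := by
  induction hT with
  | atom s => exact ⟨_, Relation.ReflTransGen.single (Step.negAtom s), .atom _⟩
  | @grad s T' hT' ih =>
    obtain ⟨H1, r1, u1⟩ := ih
    obtain ⟨H2, r2, u2⟩ := gradAtomUCE (c := c) s u1
    refine ⟨.or (.atom (s.compl c)) H2, ?_, .or (.atom _) u2⟩
    exact Relation.ReflTransGen.head (Step.negGrad s T') (redOrR ((redGradR r1).trans r2))

lemma negUCE {F : Fm A} (h : UCE F) :
    ∃ H, Red c (.neg F) H ∧ UCE H := by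
  induction h with
  | atom s => exact ⟨_, Relation.ReflTransGen.single (Step.negAtom s), .atom _⟩
  | @and F G h1 h2 ih1 ih2 =>
    obtain ⟨H1, r1, u1⟩ := ih1
    obtain ⟨H2, r2, u2⟩ := ih2
    exact ⟨.or H1 H2,
      Relation.ReflTransGen.head (Step.negAnd _ _) ((redOrL r1).trans (redOrR r2)),
      .or u1 u2⟩
  | @or F G h1 h2 ih1 ih2 =>
    obtain ⟨H1, r1, u1⟩ := ih1
    obtain ⟨H2, r2, u2⟩ := ih2
    exact ⟨.and H1 H2,
      Relation.ReflTransGen.head (Step.negOr _ _) ((redAndL r1).trans (redAndR r2)),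
      .and u1 u2⟩
  | chain s hT => exact negTailUCE (.grad s hT)

end StmtAux

/-- Every formula reduces, via the ¬- and ⋗-rewrite rules,
into some formula in unit chain expansion. -/
theorem stmt0 {A : Type} (c : A → A) (hc : Function.Involutive c) (F : Fm A) :
    ∃ F' : Fm A, Red c F F' ∧ UCE F' := by
  induction F with
  | atom s => exact ⟨_, Relation.ReflTransGen.refl, .atom s⟩
  | and F G ihF ihG =>
    obtain ⟨F', rF, uF⟩ := ihF
    obtain ⟨G', rG, uG⟩ := ihG
    exact ⟨.and F' G', (redAndL rF).trans (redAndR rG), .and uF uG⟩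
  | or F G ihF ihG =>
    obtain ⟨F', rF, uF⟩ := ihF
    obtain ⟨G', rG, uG⟩ := ihG
    exact ⟨.or F' G', (redOrL rF).trans (redOrR rG), .or uF uG⟩
  | neg F ih =>
    obtain ⟨F', r, u⟩ := ih
    obtain ⟨H, r2, u2⟩ := negUCE u
    exact ⟨H, (redNeg r).trans r2, u2⟩
  | grad F G ihF ihG =>
    obtain ⟨F', rF, uF⟩ := ihF
    obtain ⟨G', rG, uG⟩ := ihG
    obtain ⟨H, r2, u2⟩ := gradUCE uF uG
    exact ⟨H, ((redGradL rF).trans (redGradR rG)).trans r2, u2⟩
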